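/- The privacy-constrained guessing function h is continuous and concave on the interval [P_c(X), P_c(X|Y)], and for every ε ∈ [P_c(X), P_c(X|Y)] the supremum defining h(ε) is attained: there exists G ∈ ℱ with 𝒫(G) = ε and 𝒰(G) = h(ε). -/

import Mathlib

open Finset

/-- The privacy `𝒫(F) = P_c(X|Z)` of a filter `F`, for a joint pmf `P` of `(X,Y)` on
`{1,…,M} × {1,…,N}` (modeled as `Fin (M+1) × Fin (N+1)`), with `Z` on an alphabet of
size `N+2`. -/
noncomputable def privF {M N : ℕ} (P : Fin (M + 1) → Fin (N + 1) → ℝ)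
    (F : Fin (N + 1) → Fin (N + 2) → ℝ) : ℝ :=
  ∑ z, ⨆ x, ∑ y, P x y * F y z

/-- The utility `𝒰(F) = P_c(Y|Z)` of a filter `F`. -/
noncomputable def utilF {M N : ℕ} (P : Fin (M + 1) → Fin (N + 1) → ℝ)
    (F : Fin (N + 1) → Fin (N + 2) → ℝ) : ℝ :=
  ∑ z, ⨆ y, (∑ x, P x y) * F y z

/-- `F ∈ ℱ`: `F` is a row-stochastic `(N+1) × (N+2)` matrix. -/
def IsFilter {N : ℕ} (F : Fin (N + 1) → Fin (N + 2) → ℝ) : Prop :=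
  (∀ y z, 0 ≤ F y z) ∧ ∀ y, ∑ z, F y z = 1

/-- The privacy-constrained guessing function `h(ε)`. -/
noncomputable def hFun {M N : ℕ} (P : Fin (M + 1) → Fin (N + 1) → ℝ) (ε : ℝ) : ℝ :=
  sSup {u | ∃ F, IsFilter F ∧ privF P F ≤ ε ∧ u = utilF P F}

/-- `P_c(X)`. -/
noncomputable def PcX {M N : ℕ} (P : Fin (M + 1) → Fin (N + 1) → ℝ) : ℝ :=
  ⨆ x, ∑ y, P x y

/-- `P_c(X|Y)`. -/
noncomputable def PcXY {M N : ℕ} (P : Fin (M + 1) → Fin (N + 1) → ℝ) : ℝ :=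
  ∑ y, ⨆ x, P x y

namespace HFunAux

/-- finite sup of continuous real functions is continuous -/
lemma continuous_ciSup {ι X : Type*} [Fintype ι] [Nonempty ι] [TopologicalSpace X]
    (g : ι → X → ℝ) (hg : ∀ i, Continuous (g i)) :
    Continuous fun x => ⨆ i, g i x := by
  have h1 : (fun x => ⨆ i, g i x)
      = fun x => Finset.univ.sup' Finset.univ_nonempty (fun i => g i x) := by
    funext x; rw [Finset.sup'_univ_eq_ciSup]
  rw [h1]
  have : ∀ (s : Finset ι) (hs : s.Nonempty),
      Continuous fun x => s.sup' hs (fun i => g i x) := by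
    intro s hs
    induction hs using Finset.Nonempty.cons_induction with
    | singleton a => exact hg a
    | cons a s ha hs ih =>
        simp only [Finset.sup'_cons hs]
        exact (hg a).max ih
  exact this _ _

section P
variable {M N : ℕ} (P : Fin (M + 1) → Fin (N + 1) → ℝ)

noncomputable def fP (c : Fin (N + 1) → ℝ) : ℝ := ⨆ x, ∑ y, P x y * c y
noncomputable def gP (c : Fin (N + 1) → ℝ) : ℝ := ⨆ y, (∑ x, P x y) * c y

lemma privF_eq (F : Fin (N + 1) → Fin (N + 2) → ℝ) :
    privF P F = ∑ z, fP P (fun y => F y z) := rfl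

lemma utilF_eq (F : Fin (N + 1) → Fin (N + 2) → ℝ) :
    utilF P F = ∑ z, gP P (fun y => F y z) := rfl

lemma fP_zero : fP P (fun _ => 0) = 0 := by
  simp [fP]

lemma gP_zero : gP P (fun _ => 0) = 0 := by
  simp [gP]

lemma fP_smul (t : ℝ) (ht : 0 ≤ t) (c : Fin (N + 1) → ℝ) :
    fP P (fun y => t * c y) = t * fP P c := by
  unfold fP
  rw [Real.mul_iSup_of_nonneg ht]
  congr 1; funext x
  rw [Finset.mul_sum]
  congr 1; funext y; ring

lemma gP_smul (t : ℝ) (ht : 0 ≤ t) (c : Fin (N + 1) → ℝ) :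
    gP P (fun y => t * c y) = t * gP P c := by
  unfold gP
  rw [Real.mul_iSup_of_nonneg ht]
  congr 1; funext y; ring

lemma fP_nonneg (hP : ∀ x y, 0 ≤ P x y) (c : Fin (N + 1) → ℝ) (hc : ∀ y, 0 ≤ c y) :
    0 ≤ fP P c := by
  refine le_ciSup_of_le (Finite.bddAbove_range _) 0 ?_
  exact Finset.sum_nonneg fun y _ => mul_nonneg (hP 0 y) (hc y)

lemma continuous_privF : Continuous (privF P) := by
  apply continuous_finset_sum
  intro z _
  apply continuous_ciSup
  intro x
  apply continuous_finset_sum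
  intro y _
  exact continuous_const.mul ((continuous_apply z).comp (continuous_apply y))

lemma continuous_utilF : Continuous (utilF P) := by
  apply continuous_finset_sum
  intro z _
  apply continuous_ciSup
  intro y
  exact continuous_const.mul ((continuous_apply z).comp (continuous_apply y))

end P


lemma sum_dite_castLE {n k : ℕ} (hk : k ≤ n) (ψ : Fin k → ℝ) :
    ∑ z : Fin n, (if h : (z : ℕ) < k then ψ ⟨z, h⟩ else 0) = ∑ i : Fin k, ψ i := by
  set f : ℕ → ℝ := fun m => if h : m < k then ψ ⟨m, h⟩ else 0 with hf
  have h1 : ∑ z : Fin n, (if h : (z : ℕ) < k then ψ ⟨z, h⟩ else 0)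
      = ∑ m ∈ Finset.range n, f m := by
    rw [← Fin.sum_univ_eq_sum_range f n]
  have h2 : ∑ i : Fin k, ψ i = ∑ m ∈ Finset.range k, f m := by
    rw [← Fin.sum_univ_eq_sum_range f k]
    apply Finset.sum_congr rfl
    intro i _
    simp [hf]
  rw [h1, h2]
  symm
  apply Finset.sum_subset (Finset.range_subset_range.mpr hk)
  intro m _ hm
  rw [Finset.mem_range, not_lt] at hm
  simp [hf, not_lt.mpr hm]

lemma sum_eq_subtype_sum {J V : Type*} [Fintype J] [AddCommMonoid V]
    (p : J → Prop) [DecidablePred p] (φ : J → V) (hz : ∀ j, ¬ p j → φ j = 0) :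
    ∑ j : J, φ j = ∑ i : {j // p j}, φ i := by
  rw [← Finset.sum_subtype (Finset.univ.filter (fun j => p j)) (by intro j; simp) φ]
  exact (Finset.sum_subset (Finset.filter_subset _ _)
    (fun j _ hj => hz j (by simpa using hj))).symm

/-- Carathéodory-style weight reduction keeping the barycenter, not decreasing a linear
objective, and ending with at most `card ι` atoms. -/
lemma reduce {J ι : Type*} [Fintype J] [DecidableEq J] [Fintype ι]
    (A : J → ι → ℝ) (c : J → ℝ) (hA : ∀ j i, 0 ≤ A j i) (hA0 : ∀ j, A j = 0 → c j ≤ 0) :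
    ∀ (n : ℕ) (w : J → ℝ), (∀ j, 0 ≤ w j) →
      (Finset.univ.filter (fun j => w j ≠ 0)).card ≤ n →
    ∃ w' : J → ℝ, (∀ j, 0 ≤ w' j) ∧ (∑ j, w' j • A j = ∑ j, w j • A j) ∧
      (∑ j, w j * c j ≤ ∑ j, w' j * c j) ∧
      (Finset.univ.filter (fun j => w' j ≠ 0)).card ≤ Fintype.card ι := by
  intro n
  induction n with
  | zero =>
      intro w hw hcard
      exact ⟨w, hw, rfl, le_refl _, le_trans hcard (Nat.zero_le _)⟩
  | succ n ih =>
      intro w hw hcard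
      by_cases h0 : ∃ j0, w j0 ≠ 0 ∧ A j0 = 0
      · obtain ⟨j0, hj0w, hj0A⟩ := h0
        set w1 : J → ℝ := Function.update w j0 0 with hw1
        have hw1n : ∀ j, 0 ≤ w1 j := by
          intro j
          by_cases hj : j = j0
          · simp [hw1, hj]
          · simp [hw1, Function.update_of_ne hj]; exact hw j
        have hsupp : (Finset.univ.filter (fun j => w1 j ≠ 0))
            ⊆ (Finset.univ.filter (fun j => w j ≠ 0)).erase j0 := by
          intro j hj
          rw [Finset.mem_filter] at hj
          rcases hj with ⟨_, hj2⟩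
          by_cases hjj : j = j0
          · exfalso; apply hj2; simp [hw1, hjj]
          · rw [Finset.mem_erase]
            refine ⟨hjj, ?_⟩
            rw [Finset.mem_filter]
            refine ⟨Finset.mem_univ _, ?_⟩
            simpa [hw1, Function.update_of_ne hjj] using hj2
        have hcard1 : (Finset.univ.filter (fun j => w1 j ≠ 0)).card ≤ n := by
          have h1 := Finset.card_le_card hsupp
          have h2 : j0 ∈ Finset.univ.filter (fun j => w j ≠ 0) := by
            rw [Finset.mem_filter]; exact ⟨Finset.mem_univ _, hj0w⟩
          have h3 := Finset.card_erase_of_mem h2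
          omega
        obtain ⟨w', hn', hs', hv', hc'⟩ := ih w1 hw1n hcard1
        refine ⟨w', hn', ?_, ?_, hc'⟩
        · rw [hs']
          apply Finset.sum_congr rfl
          intro j _
          by_cases hj : j = j0
          · subst hj; rw [hj0A]; simp
          · simp [hw1, Function.update_of_ne hj]
        · refine le_trans ?_ hv'
          apply Finset.sum_le_sum
          intro j _
          by_cases hj : j = j0
          · subst hj
            have : w j * c j ≤ 0 := mul_nonpos_of_nonneg_of_nonpos (hw j) (hA0 j hj0A)
            simpa [hw1] using this
          · simp [hw1, Function.update_of_ne hj]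
      · push_neg at h0
        by_cases hli : LinearIndependent ℝ (fun j : {j // w j ≠ 0} => A j)
        · refine ⟨w, hw, rfl, le_refl _, ?_⟩
          have h1 : Fintype.card {j // w j ≠ 0} ≤ Module.finrank ℝ (ι → ℝ) :=
            hli.fintype_card_le_finrank
          rw [Module.finrank_fintype_fun_eq_card] at h1
          rwa [Fintype.card_subtype] at h1
        · rw [Fintype.not_linearIndependent_iff] at hli
          obtain ⟨g, hgsum, jg, hjg⟩ := hli
          set ζ0 : J → ℝ := fun j => if h : w j ≠ 0 then g ⟨j, h⟩ else 0 with hζ0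
          have hζ0supp : ∀ j, w j = 0 → ζ0 j = 0 := by
            intro j hj; simp [hζ0, hj]
          have hζ0sum : ∑ j, ζ0 j • A j = 0 := by
            rw [sum_eq_subtype_sum (fun j => w j ≠ 0) (fun j => ζ0 j • A j)
              (fun j hj => by
                have h5 := hζ0supp j (not_not.mp hj)
                simp only [h5, zero_smul])]
            rw [← hgsum]
            apply Finset.sum_congr rfl
            intro i _
            congr 1
            simp [hζ0, i.2]
          have hζ0ne : ζ0 (jg : J) ≠ 0 := by
            have : ζ0 (jg : J) = g jg := by simp [hζ0, jg.2]
            rw [this]; exact hjg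
          -- choose sign so the objective direction is nonnegative
          set ζ : J → ℝ := if 0 ≤ ∑ j, ζ0 j * c j then ζ0 else fun j => -ζ0 j with hζ
          have hζsupp : ∀ j, w j = 0 → ζ j = 0 := by
            intro j hj
            by_cases hs : 0 ≤ ∑ j, ζ0 j * c j <;> simp [hζ, hs, hζ0supp j hj]
          have hζsum : ∑ j, ζ j • A j = 0 := by
            by_cases hs : 0 ≤ ∑ j, ζ0 j * c j
            · simpa [hζ, hs] using hζ0sum
            · simp only [hζ, if_neg hs]
              simp only [neg_smul]
              rw [Finset.sum_neg_distrib, hζ0sum, neg_zero]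
          have hζval : 0 ≤ ∑ j, ζ j * c j := by
            by_cases hs : 0 ≤ ∑ j, ζ0 j * c j
            · simpa [hζ, hs] using hs
            · simp only [hζ, if_neg hs]
              push_neg at hs
              have : ∑ j, -ζ0 j * c j = -∑ j, ζ0 j * c j := by
                rw [← Finset.sum_neg_distrib]
                apply Finset.sum_congr rfl; intro j _; ring
              rw [this]; linarith
          have hζne : ζ (jg : J) ≠ 0 := by
            by_cases hs : 0 ≤ ∑ j, ζ0 j * c j <;>
              simp [hζ, hs, hζ0ne]
          -- some coordinate of ζ is negative
          have hneg : ∃ j1, ζ j1 < 0 := by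
            by_contra hc
            push_neg at hc
            have hjgJ : w (jg : J) ≠ 0 := jg.2
            have hAjg : A (jg : J) ≠ 0 := h0 _ hjgJ
            obtain ⟨i0, hi0⟩ : ∃ i, A (jg : J) i ≠ 0 := by
              by_contra hAi; push_neg at hAi
              exact hAjg (funext hAi)
            have hi0pos : 0 < A (jg : J) i0 := lt_of_le_of_ne (hA _ _) (Ne.symm hi0)
            have hsum_i : ∑ j, ζ j * A j i0 = 0 := by
              have := congrFun hζsum i0
              simpa [Finset.sum_apply] using this
            have hterm : ∀ j ∈ Finset.univ, 0 ≤ ζ j * A j i0 :=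
              fun j _ => mul_nonneg (hc j) (hA j i0)
            have := (Finset.sum_eq_zero_iff_of_nonneg hterm).mp hsum_i (jg : J)
              (Finset.mem_univ _)
            have hζjgpos : 0 < ζ (jg : J) := lt_of_le_of_ne (hc _) (Ne.symm hζne)
            nlinarith
          obtain ⟨j1, hj1⟩ := hneg
          -- the minimizing index
          set T : Finset J := Finset.univ.filter (fun j => ζ j < 0) with hT
          have hj1T : j1 ∈ T := by rw [hT, Finset.mem_filter]; exact ⟨Finset.mem_univ _, hj1⟩
          obtain ⟨j2, hj2T, hj2min⟩ := Finset.exists_min_image T (fun j => w j / (-ζ j)) ⟨j1, hj1T⟩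
          have hζj2 : ζ j2 < 0 := by
            rw [hT, Finset.mem_filter] at hj2T; exact hj2T.2
          set t : ℝ := w j2 / (-ζ j2) with ht
          have htn : 0 ≤ t := div_nonneg (hw j2) (by linarith)
          set w1 : J → ℝ := fun j => w j + t * ζ j with hw1
          have hkey : ∀ j, ζ j < 0 → t * (-ζ j) ≤ w j := by
            intro j hj
            have hjT : j ∈ T := by rw [hT, Finset.mem_filter]; exact ⟨Finset.mem_univ _, hj⟩
            calc t * (-ζ j) ≤ w j / (-ζ j) * (-ζ j) :=
                  mul_le_mul_of_nonneg_right (hj2min j hjT) (by linarith)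
              _ = w j := div_mul_cancel₀ _ (by linarith : -ζ j ≠ 0)
          have hw1n : ∀ j, 0 ≤ w1 j := by
            intro j
            rcases lt_or_ge (ζ j) 0 with h | h
            · have := hkey j h
              simp only [hw1]; nlinarith
            · simp only [hw1]
              have : 0 ≤ t * ζ j := mul_nonneg htn h
              linarith [hw j]
          have hw1j2 : w1 j2 = 0 := by
            have hcancel : t * -ζ j2 = w j2 := by
              rw [ht]; exact div_mul_cancel₀ _ (by linarith : -ζ j2 ≠ 0)
            simp only [hw1]; linarith
          have hj2supp : w j2 ≠ 0 := by
            intro h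
            exact (ne_of_lt hζj2) (hζsupp j2 h)
          have hsupp1 : (Finset.univ.filter (fun j => w1 j ≠ 0))
              ⊆ (Finset.univ.filter (fun j => w j ≠ 0)).erase j2 := by
            intro j hj
            rw [Finset.mem_filter] at hj
            rcases hj with ⟨_, hj2'⟩
            rw [Finset.mem_erase, Finset.mem_filter]
            constructor
            · intro hjs; apply hj2'; rw [hjs]; exact hw1j2
            · refine ⟨Finset.mem_univ _, ?_⟩
              intro hwj
              apply hj2'
              simp only [hw1, hwj, hζsupp j hwj]; ring
          have hcard1 : (Finset.univ.filter (fun j => w1 j ≠ 0)).card ≤ n := by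
            have h1 := Finset.card_le_card hsupp1
            have h2 : j2 ∈ Finset.univ.filter (fun j => w j ≠ 0) := by
              rw [Finset.mem_filter]; exact ⟨Finset.mem_univ _, hj2supp⟩
            have h3 := Finset.card_erase_of_mem h2
            omega
          obtain ⟨w', hn', hs', hv', hc'⟩ := ih w1 hw1n hcard1
          refine ⟨w', hn', ?_, ?_, hc'⟩
          · rw [hs']
            have : ∑ j, w1 j • A j = ∑ j, w j • A j + t • ∑ j, ζ j • A j := by
              rw [Finset.smul_sum]
              rw [← Finset.sum_add_distrib]
              apply Finset.sum_congr rfl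
              intro j _
              simp only [hw1]
              rw [add_smul, smul_smul]
            rw [this, hζsum, smul_zero, add_zero]
          · refine le_trans ?_ hv'
            have : ∑ j, w1 j * c j = ∑ j, w j * c j + t * ∑ j, ζ j * c j := by
              rw [Finset.mul_sum, ← Finset.sum_add_distrib]
              apply Finset.sum_congr rfl
              intro j _
              simp only [hw1]; ring
            rw [this]
            nlinarith [mul_nonneg htn hζval]


section Mix
variable {M N : ℕ} (P : Fin (M + 1) → Fin (N + 1) → ℝ)

lemma sum_filter_equivFin {α V : Type*} [Fintype α] [AddCommMonoid V] (s : Finset α)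
    (f : α → V) (hf : ∀ j ∉ s, f j = 0) :
    ∑ i : Fin s.card, f (s.equivFin.symm i) = ∑ j, f j := by
  have h1 : ∑ i : Fin s.card, f (s.equivFin.symm i) = ∑ j : {x // x ∈ s}, f j :=
    Equiv.sum_comp s.equivFin.symm (fun i : {x // x ∈ s} => f i)
  rw [h1, Finset.sum_coe_sort s f]
  exact Finset.sum_subset s.subset_univ (fun j _ hj => hf j hj)

lemma exists_enum {α : Type*} [Fintype α] (s : Finset α) :
    ∃ (k : ℕ) (e : Fin k → α), k = s.card ∧
      ∀ f : α → ℝ, (∀ j ∉ s, f j = 0) → ∑ i : Fin k, f (e i) = ∑ j, f j :=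
  ⟨s.card, fun i => s.equivFin.symm i, rfl, fun f hf => sum_filter_equivFin s f hf⟩

lemma mix (hP : ∀ x y, 0 ≤ P x y)
    (F1 F2 : Fin (N + 1) → Fin (N + 2) → ℝ) (h1 : IsFilter F1) (h2 : IsFilter F2)
    (l : ℝ) (hl0 : 0 ≤ l) (hl1 : l ≤ 1) :
    ∃ G, IsFilter G ∧
      privF P G = l * privF P F1 + (1 - l) * privF P F2 ∧
      l * utilF P F1 + (1 - l) * utilF P F2 ≤ utilF P G := by
  classical
  set col : (Fin (N + 2) ⊕ Fin (N + 2)) → Fin (N + 1) → ℝ :=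
    Sum.elim (fun z y => F1 y z) (fun z y => F2 y z) with hcol
  set wt : (Fin (N + 2) ⊕ Fin (N + 2)) → ℝ :=
    Sum.elim (fun _ => l) (fun _ => 1 - l) with hwt
  set A : (Fin (N + 2) ⊕ Fin (N + 2)) → Option (Fin (N + 1)) → ℝ :=
    fun j i => Option.casesOn i (fP P (col j)) (fun y => col j y) with hA
  have hcoln : ∀ j y, 0 ≤ col j y := by
    intro j y; cases j with
    | inl z => exact h1.1 y z
    | inr z => exact h2.1 y z
  have hAnn : ∀ j i, 0 ≤ A j i := by
    intro j i
    cases i with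
    | none => exact fP_nonneg P hP (col j) (hcoln j)
    | some y => exact hcoln j y
  have hA0 : ∀ j, A j = 0 → gP P (col j) ≤ 0 := by
    intro j hj
    have hc : col j = fun _ => 0 := funext fun y => congrFun hj (some y)
    rw [hc, gP_zero]
  have hwtn : ∀ j, 0 ≤ wt j := by
    intro j; cases j with
    | inl z => exact hl0
    | inr z =>
        simp only [hwt, Sum.elim_inr]
        linarith
  obtain ⟨w', hn', hs', hv', hc'⟩ := reduce A (fun j => gP P (col j)) hAnn hA0
    (Fintype.card (Fin (N + 2) ⊕ Fin (N + 2))) wt hwtn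
    (le_trans (Finset.card_filter_le _ _) (le_of_eq Finset.card_univ))
  set s : Finset (Fin (N + 2) ⊕ Fin (N + 2)) :=
    Finset.univ.filter (fun j => w' j ≠ 0) with hsdef
  have hw'0 : ∀ j ∉ s, w' j = 0 := by
    intro j hj
    by_contra hne
    exact hj (by rw [hsdef, Finset.mem_filter]; exact ⟨Finset.mem_univ _, hne⟩)
  obtain ⟨k, e, hke, hsum_e⟩ := exists_enum s
  have hk : k ≤ N + 2 := by
    rw [hke]
    simpa [Fintype.card_option] using hc'
  clear hke
  have key : ∀ φ : (Fin (N + 2) ⊕ Fin (N + 2)) → ℝ,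
      ∑ i : Fin k, w' (e i) * φ (e i) = ∑ j, w' j * φ j :=
    fun φ => hsum_e (fun j => w' j * φ j)
      (fun j hj => by simp only [hw'0 j hj, zero_mul])
  -- the new filter
  set G : Fin (N + 1) → Fin (N + 2) → ℝ :=
    fun y z => if h : (z : ℕ) < k
      then w' (e ⟨z, h⟩) * col (e ⟨z, h⟩) y else 0 with hG
  -- coordinates of the reduced barycenter
  have happly : ∀ i, ∑ j, w' j * A j i = ∑ j, wt j * A j i := by
    intro i
    have := congrFun hs' i
    simpa [Finset.sum_apply] using this
  have hBsome : ∀ y, ∑ j, wt j * A j (some y) = 1 := by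
    intro y
    have h3 : ∑ j, wt j * A j (some y)
        = (∑ z, l * F1 y z) + (∑ z, (1 - l) * F2 y z) := by
      rw [Fintype.sum_sum_type]
      rfl
    rw [h3, ← Finset.mul_sum, ← Finset.mul_sum, h1.2 y, h2.2 y]
    ring
  have hBnone : ∑ j, wt j * A j none = l * privF P F1 + (1 - l) * privF P F2 := by
    have h3 : ∑ j, wt j * A j none
        = (∑ z, l * fP P (fun y => F1 y z)) + (∑ z, (1 - l) * fP P (fun y => F2 y z)) := by
      rw [Fintype.sum_sum_type]
      rfl
    rw [h3, ← Finset.mul_sum, ← Finset.mul_sum, privF_eq, privF_eq]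
  have hval : ∑ j, wt j * gP P (col j) = l * utilF P F1 + (1 - l) * utilF P F2 := by
    have h3 : ∑ j, wt j * gP P (col j)
        = (∑ z, l * gP P (fun y => F1 y z)) + (∑ z, (1 - l) * gP P (fun y => F2 y z)) := by
      rw [Fintype.sum_sum_type]
      rfl
    rw [h3, ← Finset.mul_sum, ← Finset.mul_sum, utilF_eq, utilF_eq]
  refine ⟨G, ⟨?_, ?_⟩, ?_, ?_⟩
  · -- nonneg
    intro y z
    simp only [hG]
    by_cases hz : (z : ℕ) < k
    · rw [dif_pos hz]
      exact mul_nonneg (hn' _) (hcoln _ _)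
    · rw [dif_neg hz]
  · -- rows sum to one
    intro y
    have h6 : ∑ z, G y z
        = ∑ i : Fin k, w' (e i) * col (e i) y := by
      simp only [hG]
      exact sum_dite_castLE hk (fun i => w' (e i) * col (e i) y)
    rw [h6, key (fun j => col j y)]
    have h7 : ∑ j, w' j * col j y = ∑ j, wt j * A j (some y) := happly (some y)
    rw [h7, hBsome]
  · -- privacy value
    have h8 : privF P G = ∑ z : Fin (N + 2),
        (if h : (z : ℕ) < k
          then w' (e ⟨z, h⟩) * fP P (col (e ⟨z, h⟩)) else 0) := by
      rw [privF_eq]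
      apply Finset.sum_congr rfl
      intro z _
      by_cases hz : (z : ℕ) < k
      · rw [dif_pos hz]
        have h9 : (fun y => G y z)
            = fun y => w' (e ⟨z, hz⟩) * col (e ⟨z, hz⟩) y := by
          funext y; simp only [hG, dif_pos hz]
        rw [h9, fP_smul P _ (hn' _)]
      · rw [dif_neg hz]
        have h9 : (fun y => G y z) = fun _ => 0 := by
          funext y; simp only [hG, dif_neg hz]
        rw [h9, fP_zero]
    rw [h8, sum_dite_castLE hk
      (fun i : Fin k => w' (e i) * fP P (col (e i))),
      key (fun j => fP P (col j))]
    have h9 : ∑ j, w' j * fP P (col j) = ∑ j, wt j * A j none := happly none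
    rw [h9, hBnone]
  · -- utility value
    have h8 : utilF P G = ∑ z : Fin (N + 2),
        (if h : (z : ℕ) < k
          then w' (e ⟨z, h⟩) * gP P (col (e ⟨z, h⟩)) else 0) := by
      rw [utilF_eq]
      apply Finset.sum_congr rfl
      intro z _
      by_cases hz : (z : ℕ) < k
      · rw [dif_pos hz]
        have h9 : (fun y => G y z)
            = fun y => w' (e ⟨z, hz⟩) * col (e ⟨z, hz⟩) y := by
          funext y; simp only [hG, dif_pos hz]
        rw [h9, gP_smul P _ (hn' _)]
      · rw [dif_neg hz]
        have h9 : (fun y => G y z) = fun _ => 0 := by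
          funext y; simp only [hG, dif_neg hz]
        rw [h9, gP_zero]
    rw [h8, sum_dite_castLE hk
      (fun i : Fin k => w' (e i) * gP P (col (e i))),
      key (fun j => gP P (col j))]
    rw [← hval]
    exact hv'

end Mix

section Rest
variable {M N : ℕ} (P : Fin (M + 1) → Fin (N + 1) → ℝ)

-- ### chunk d
lemma isCompact_filters :
    IsCompact {F : Fin (N + 1) → Fin (N + 2) → ℝ | IsFilter F} := by
  have h : {F : Fin (N + 1) → Fin (N + 2) → ℝ | IsFilter F}
      = Set.pi Set.univ (fun _ : Fin (N + 1) => stdSimplex ℝ (Fin (N + 2))) := by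
    ext F
    simp only [Set.mem_setOf_eq, Set.mem_pi, Set.mem_univ, forall_true_left,
      stdSimplex, IsFilter]
    constructor
    · rintro ⟨ha, hb⟩ y; exact ⟨ha y, hb y⟩
    · intro h; exact ⟨fun y => (h y).1, fun y => (h y).2⟩
  rw [h]
  exact isCompact_univ_pi fun _ => isCompact_stdSimplex _ _

lemma F0_spec :
    ∃ F0 : Fin (N + 1) → Fin (N + 2) → ℝ, IsFilter F0 ∧ privF P F0 = PcX P := by
  refine ⟨fun _ z => if z = 0 then 1 else 0, ⟨?_, ?_⟩, ?_⟩
  · intro y z; dsimp only; split <;> norm_num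
  · intro y; simp
  · rw [privF_eq]
    have h : ∀ z : Fin (N + 2), fP P (fun _ => if z = 0 then (1 : ℝ) else 0)
        = if z = 0 then PcX P else 0 := by
      intro z
      by_cases hz : z = 0
      · simp only [hz, if_pos rfl]
        unfold fP PcX
        simp
      · simp only [if_neg hz]
        exact fP_zero P
    simp only [h]
    simp

lemma utilF_le_one (hpos : ∀ x y, 0 ≤ P x y) (hsum : ∑ x, ∑ y, P x y = 1)
    (F : Fin (N + 1) → Fin (N + 2) → ℝ) (hF : IsFilter F) : utilF P F ≤ 1 := by
  rw [utilF_eq]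
  have hq : ∀ y, 0 ≤ ∑ x, P x y := fun y => Finset.sum_nonneg fun x _ => hpos x y
  have h1 : ∀ z, gP P (fun y => F y z) ≤ ∑ y, (∑ x, P x y) * F y z := by
    intro z
    unfold gP
    apply ciSup_le
    intro y0
    exact Finset.single_le_sum (fun y _ => mul_nonneg (hq y) (hF.1 y z)) (Finset.mem_univ y0)
  calc ∑ z, gP P (fun y => F y z) ≤ ∑ z, ∑ y, (∑ x, P x y) * F y z :=
        Finset.sum_le_sum fun z _ => h1 z
    _ = ∑ y, (∑ x, P x y) * ∑ z, F y z := by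
        rw [Finset.sum_comm]
        exact Finset.sum_congr rfl fun y _ => (Finset.mul_sum _ _ _).symm
    _ = ∑ y, ∑ x, P x y := Finset.sum_congr rfl fun y _ => by rw [hF.2 y, mul_one]
    _ = 1 := by rw [Finset.sum_comm]; exact hsum

lemma S_nonempty {ε : ℝ} (hε : PcX P ≤ ε) :
    {u | ∃ F, IsFilter F ∧ privF P F ≤ ε ∧ u = utilF P F}.Nonempty := by
  obtain ⟨F0, hF0, hp0⟩ := F0_spec P
  exact ⟨utilF P F0, F0, hF0, le_of_eq_of_le hp0 hε, rfl⟩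

lemma S_bdd (hpos : ∀ x y, 0 ≤ P x y) (hsum : ∑ x, ∑ y, P x y = 1) (ε : ℝ) :
    BddAbove {u | ∃ F, IsFilter F ∧ privF P F ≤ ε ∧ u = utilF P F} := by
  refine ⟨1, ?_⟩
  rintro u ⟨F, hF, _, rfl⟩
  exact utilF_le_one P hpos hsum F hF

lemma hFun_mono (hpos : ∀ x y, 0 ≤ P x y) (hsum : ∑ x, ∑ y, P x y = 1)
    {ε1 ε2 : ℝ} (hε1 : PcX P ≤ ε1) (h12 : ε1 ≤ ε2) : hFun P ε1 ≤ hFun P ε2 := by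
  apply csSup_le_csSup (S_bdd P hpos hsum ε2) (S_nonempty P hε1)
  rintro u ⟨F, hF, hp, rfl⟩
  exact ⟨F, hF, le_trans hp h12, rfl⟩

lemma exists_max (hpos : ∀ x y, 0 ≤ P x y) (hsum : ∑ x, ∑ y, P x y = 1)
    {ε : ℝ} (hε : PcX P ≤ ε) :
    ∃ G, IsFilter G ∧ privF P G ≤ ε ∧ utilF P G = hFun P ε := by
  classical
  set K := {F : Fin (N + 1) → Fin (N + 2) → ℝ | IsFilter F} ∩ privF P ⁻¹' Set.Iic ε with hK
  have hKc : IsCompact K := (isCompact_filters).inter_right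
    (isClosed_Iic.preimage (continuous_privF P))
  have hKne : K.Nonempty := by
    obtain ⟨F0, hF0, hp0⟩ := F0_spec P
    exact ⟨F0, hF0, by simp only [Set.mem_preimage, Set.mem_Iic]; exact le_of_eq_of_le hp0 hε⟩
  obtain ⟨G, hGK, hGmax⟩ := hKc.exists_isMaxOn hKne (continuous_utilF P).continuousOn
  refine ⟨G, hGK.1, hGK.2, ?_⟩
  apply le_antisymm
  · exact le_csSup (S_bdd P hpos hsum ε) ⟨G, hGK.1, hGK.2, rfl⟩
  · apply csSup_le (S_nonempty P hε)
    rintro u ⟨F, hF, hp, rfl⟩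
    exact hGmax ⟨hF, hp⟩

lemma usc_left (hpos : ∀ x y, 0 ≤ P x y) (hsum : ∑ x, ∑ y, P x y = 1)
    (δ : ℝ) (hδ : 0 < δ) :
    ∃ η > 0, ∀ x, PcX P ≤ x → x < PcX P + η →
      hFun P x ≤ hFun P (PcX P) + δ := by
  classical
  set c := hFun P (PcX P) + δ with hc
  set Kd := {F : Fin (N + 1) → Fin (N + 2) → ℝ | IsFilter F} ∩ utilF P ⁻¹' Set.Ici c with hKd
  by_cases hne : Kd.Nonempty
  · have hKc : IsCompact Kd := (isCompact_filters).inter_right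
      (isClosed_Ici.preimage (continuous_utilF P))
    obtain ⟨Fm, hFmK, hFmmin⟩ := hKc.exists_isMinOn hne (continuous_privF P).continuousOn
    have hFm2 : c ≤ utilF P Fm := hFmK.2
    have hma : PcX P < privF P Fm := by
      by_contra hle
      push_neg at hle
      have h2 : utilF P Fm ≤ hFun P (PcX P) :=
        le_csSup (S_bdd P hpos hsum _) ⟨Fm, hFmK.1, hle, rfl⟩
      rw [hc] at hFm2
      linarith
    refine ⟨privF P Fm - PcX P, by linarith, ?_⟩
    intro x hx1 hx2
    apply csSup_le (S_nonempty P hx1)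
    rintro u ⟨F, hF1, hF2, rfl⟩
    by_contra hgt
    push_neg at hgt
    have hFK : F ∈ Kd := ⟨hF1, Set.mem_Ici.mpr (le_of_lt hgt)⟩
    have h3 : privF P Fm ≤ privF P F := hFmmin hFK
    linarith
  · refine ⟨1, one_pos, ?_⟩
    intro x hx1 _
    apply csSup_le (S_nonempty P hx1)
    rintro u ⟨F, hF1, _, rfl⟩
    by_contra hgt
    push_neg at hgt
    exact hne ⟨F, hF1, Set.mem_Ici.mpr (le_of_lt hgt)⟩

lemma fP_ind (y0 : Fin (N + 1)) :
    fP P (fun y => if y = y0 then 1 else 0) = ⨆ x, P x y0 := by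
  unfold fP
  congr 1
  funext x
  simp [mul_ite]

lemma gP_ind (hpos : ∀ x y, 0 ≤ P x y) (y0 : Fin (N + 1)) :
    gP P (fun y => if y = y0 then 1 else 0) = ∑ x, P x y0 := by
  unfold gP
  have hq : ∀ y, 0 ≤ ∑ x, P x y := fun y => Finset.sum_nonneg fun x _ => hpos x y
  apply le_antisymm
  · apply ciSup_le
    intro y
    by_cases hy : y = y0
    · subst hy; simp
    · simp [hy, hq y0]
  · refine le_trans ?_ (le_ciSup (Finite.bddAbove_range _) y0)
    simp

lemma Fid_spec (hpos : ∀ x y, 0 ≤ P x y) (hsum : ∑ x, ∑ y, P x y = 1) :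
    ∃ Fid : Fin (N + 1) → Fin (N + 2) → ℝ,
      IsFilter Fid ∧ privF P Fid = PcXY P ∧ utilF P Fid = 1 := by
  classical
  refine ⟨fun y z => if (y : ℕ) = (z : ℕ) then 1 else 0, ⟨?_, ?_⟩, ?_, ?_⟩
  · intro y z; dsimp only; split <;> norm_num
  · intro y
    have h : ∀ z : Fin (N + 2), ((y : ℕ) = (z : ℕ)) ↔ (z = Fin.castSucc y) := by
      intro z
      rw [Fin.ext_iff, Fin.coe_castSucc, eq_comm]
    simp only [h]
    simp
  · rw [privF_eq]
    have h : ∀ z : Fin (N + 2), fP P (fun y => if (y : ℕ) = (z : ℕ) then (1 : ℝ) else 0)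
        = if hz : (z : ℕ) < N + 1 then (fun i : Fin (N + 1) => ⨆ x, P x i) ⟨z, hz⟩ else 0 := by
      intro z
      by_cases hz : (z : ℕ) < N + 1
      · rw [dif_pos hz]
        have hcol : (fun y : Fin (N + 1) => if (y : ℕ) = (z : ℕ) then (1 : ℝ) else 0)
            = fun y => if y = (⟨(z : ℕ), hz⟩ : Fin (N + 1)) then 1 else 0 := by
          funext y
          congr 1
          simp [Fin.ext_iff]
        rw [hcol, fP_ind]
      · rw [dif_neg hz]
        have hcol : (fun y : Fin (N + 1) => if (y : ℕ) = (z : ℕ) then (1 : ℝ) else 0)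
            = fun _ => 0 := by
          funext y
          rw [if_neg]
          have := y.isLt
          omega
        rw [hcol, fP_zero]
    simp only [h]
    rw [sum_dite_castLE (by omega) (fun i : Fin (N + 1) => ⨆ x, P x i)]
    rfl
  · rw [utilF_eq]
    have h : ∀ z : Fin (N + 2), gP P (fun y => if (y : ℕ) = (z : ℕ) then (1 : ℝ) else 0)
        = if hz : (z : ℕ) < N + 1 then (fun i : Fin (N + 1) => ∑ x, P x i) ⟨z, hz⟩ else 0 := by
      intro z
      by_cases hz : (z : ℕ) < N + 1
      · rw [dif_pos hz]
        have hcol : (fun y : Fin (N + 1) => if (y : ℕ) = (z : ℕ) then (1 : ℝ) else 0)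
            = fun y => if y = (⟨(z : ℕ), hz⟩ : Fin (N + 1)) then 1 else 0 := by
          funext y
          congr 1
          simp [Fin.ext_iff]
        rw [hcol, gP_ind P hpos]
      · rw [dif_neg hz]
        have hcol : (fun y : Fin (N + 1) => if (y : ℕ) = (z : ℕ) then (1 : ℝ) else 0)
            = fun _ => 0 := by
          funext y
          rw [if_neg]
          have := y.isLt
          omega
        rw [hcol, gP_zero]
    simp only [h]
    rw [sum_dite_castLE (by omega) (fun i : Fin (N + 1) => ∑ x, P x i)]
    rw [Finset.sum_comm]
    exact hsum

theorem main_thm (hpos : ∀ x y, 0 ≤ P x y) (hsum : ∑ x, ∑ y, P x y = 1) :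
    ContinuousOn (hFun P) (Set.Icc (PcX P) (PcXY P)) ∧
    ConcaveOn ℝ (Set.Icc (PcX P) (PcXY P)) (hFun P) ∧
    ∀ ε ∈ Set.Icc (PcX P) (PcXY P),
      ∃ G, IsFilter G ∧ privF P G = ε ∧ utilF P G = hFun P ε := by
  have hconc : ConcaveOn ℝ (Set.Icc (PcX P) (PcXY P)) (hFun P) := by
    refine ⟨convex_Icc _ _, ?_⟩
    intro x hx y hy a b ha hb hab
    obtain ⟨G1, hG1f, hG1p, hG1u⟩ := exists_max P hpos hsum hx.1
    obtain ⟨G2, hG2f, hG2p, hG2u⟩ := exists_max P hpos hsum hy.1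
    have hb' : b = 1 - a := by linarith
    obtain ⟨G, hGf, hGp, hGu⟩ := mix P hpos G1 G2 hG1f hG2f a ha (by linarith)
    have hple : privF P G ≤ a * x + b * y := by
      rw [hGp, hb']
      have h1 : a * privF P G1 ≤ a * x := mul_le_mul_of_nonneg_left hG1p ha
      have h2 : (1 - a) * privF P G2 ≤ (1 - a) * y :=
        mul_le_mul_of_nonneg_left hG2p (by linarith)
      linarith
    have h3 : utilF P G ≤ hFun P (a * x + b * y) :=
      le_csSup (S_bdd P hpos hsum _) ⟨G, hGf, hple, rfl⟩
    have h4 : a * utilF P G1 + (1 - a) * utilF P G2 ≤ utilF P G := hGu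
    rw [hG1u, hG2u] at h4
    simp only [smul_eq_mul]
    rw [hb'] at h3 ⊢
    linarith
  have hmem_att : ∀ ε ∈ Set.Icc (PcX P) (PcXY P),
      ∃ G, IsFilter G ∧ privF P G = ε ∧ utilF P G = hFun P ε := by
    intro ε hε
    obtain ⟨G0, hG0f, hG0p, hG0u⟩ := exists_max P hpos hsum hε.1
    rcases eq_or_lt_of_le hG0p with heq | hlt
    · exact ⟨G0, hG0f, heq, hG0u⟩
    · obtain ⟨Fid, hFidf, hFidp, hFidu⟩ := Fid_spec P hpos hsum
      have hεb : ε ≤ PcXY P := hε.2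
      have hd : 0 < PcXY P - privF P G0 := by linarith
      set l : ℝ := (PcXY P - ε) / (PcXY P - privF P G0) with hl
      have hl0 : 0 ≤ l := div_nonneg (by linarith) (by linarith)
      have hl1 : l ≤ 1 := by
        rw [hl, div_le_one hd]; linarith
      obtain ⟨G, hGf, hGp, hGu⟩ := mix P hpos G0 Fid hG0f hFidf l hl0 hl1
      have hGpε : privF P G = ε := by
        rw [hGp, hFidp]
        have hcanc : l * (PcXY P - privF P G0) = PcXY P - ε := by
          rw [hl]; exact div_mul_cancel₀ _ (ne_of_gt hd)
        linear_combination -hcanc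
      have hu1 : utilF P G0 ≤ 1 := utilF_le_one P hpos hsum G0 hG0f
      have h5 : utilF P G0 ≤ utilF P G := by
        rw [hFidu] at hGu
        nlinarith [mul_nonneg (sub_nonneg.mpr hl1) (sub_nonneg.mpr hu1)]
      have h6 : utilF P G ≤ hFun P ε :=
        le_csSup (S_bdd P hpos hsum _) ⟨G, hGf, le_of_eq hGpε, rfl⟩
      refine ⟨G, hGf, hGpε, le_antisymm h6 ?_⟩
      rw [← hG0u]
      exact h5
  refine ⟨?_, hconc, hmem_att⟩
  intro ε0 hε0
  have hab : PcX P ≤ PcXY P := le_trans hε0.1 hε0.2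
  rcases eq_or_lt_of_le hε0.1 with heq | hlt
  · -- left endpoint
    rw [Metric.continuousWithinAt_iff]
    intro δ hδ
    obtain ⟨η, hη, hbound⟩ := usc_left P hpos hsum (δ / 2) (by linarith)
    refine ⟨η, hη, ?_⟩
    intro x hx hdist
    have hx1 : PcX P ≤ x := hx.1
    have hxlt : x < PcX P + η := by
      rw [Real.dist_eq, abs_lt] at hdist
      linarith [hdist.2]
    have hub := hbound x hx1 hxlt
    have hlb : hFun P (PcX P) ≤ hFun P x := hFun_mono P hpos hsum (le_refl _) hx1
    rw [Real.dist_eq, ← heq, abs_of_nonneg (by linarith)]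
    linarith
  · -- interior / right part : Lipschitz-type bound from concavity and monotonicity
    set A := PcX P with hA
    set B := PcXY P with hB
    have hmemA : A ∈ Set.Icc (PcX P) (PcXY P) := ⟨le_refl _, hab⟩
    have hCn : hFun P A ≤ hFun P ε0 := hFun_mono P hpos hsum (le_refl _) (le_of_lt hlt)
    set C : ℝ := (hFun P ε0 - hFun P A) / (ε0 - A) with hC
    have hea : 0 < ε0 - A := by linarith
    have hC0 : 0 ≤ C := div_nonneg (by linarith) (by linarith)
    have claim : ∀ x ∈ Set.Icc (PcX P) (PcXY P),
        |hFun P x - hFun P ε0| ≤ C * |x - ε0| := by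
      intro x hx
      rcases le_total x ε0 with h | h
      · -- x ≤ ε0
        have hm : hFun P x ≤ hFun P ε0 := hFun_mono P hpos hsum hx.1 h
        set μ : ℝ := (ε0 - x) / (ε0 - A) with hμ
        have hμ0 : 0 ≤ μ := div_nonneg (by linarith) (by linarith)
        have hμ1 : μ ≤ 1 := by
          rw [hμ, div_le_one hea]
          linarith [hx.1]
        have hcanc : μ * (ε0 - A) = ε0 - x := by
          rw [hμ]; exact div_mul_cancel₀ _ (ne_of_gt hea)
        have hcomb : μ * A + (1 - μ) * ε0 = x := by linear_combination -hcanc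
        have hcav := hconc.2 hmemA hε0 hμ0 (by linarith : (0:ℝ) ≤ 1 - μ) (by ring)
        simp only [smul_eq_mul] at hcav
        rw [hcomb] at hcav
        have hCeq : C * (ε0 - x) = μ * hFun P ε0 - μ * hFun P A := by
          rw [hC, hμ]; ring
        rw [abs_of_nonpos (by linarith), abs_of_nonpos (by linarith)]
        have : hFun P ε0 - hFun P x ≤ C * (ε0 - x) := by
          rw [hCeq]; linarith
        linarith
      · -- ε0 ≤ x
        rcases eq_or_lt_of_le h with heq2 | hlt2
        · rw [← heq2]
          simp
        · have hm : hFun P ε0 ≤ hFun P x :=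
            hFun_mono P hpos hsum (le_of_lt hlt) h
          have hxa : 0 < x - A := by linarith
          set μ : ℝ := (x - ε0) / (x - A) with hμ
          have hμ0 : 0 ≤ μ := div_nonneg (by linarith) (by linarith)
          have hμ1 : μ ≤ 1 := by
            rw [hμ, div_le_one hxa]
            linarith
          have hcanc : μ * (x - A) = x - ε0 := by
            rw [hμ]; exact div_mul_cancel₀ _ (ne_of_gt hxa)
          have hcomb : μ * A + (1 - μ) * x = ε0 := by linear_combination -hcanc
          have hcav := hconc.2 hmemA hx hμ0 (by linarith : (0:ℝ) ≤ 1 - μ) (by ring)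
          simp only [smul_eq_mul] at hcav
          rw [hcomb] at hcav
          have h2 : (1 - μ) * (x - A) = ε0 - A := by linear_combination -hcanc
          have hK : (μ * hFun P A + (1 - μ) * hFun P x) * (x - A) ≤ hFun P ε0 * (x - A) :=
            mul_le_mul_of_nonneg_right hcav (le_of_lt hxa)
          have hexp : (μ * hFun P A + (1 - μ) * hFun P x) * (x - A)
              = (x - ε0) * hFun P A + (ε0 - A) * hFun P x := by
            linear_combination hFun P A * hcanc + hFun P x * h2
          rw [hexp] at hK
          have goal2 : (hFun P x - hFun P ε0) * (ε0 - A) ≤ (hFun P ε0 - hFun P A) * (x - ε0) := by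
            nlinarith [hK]
          rw [abs_of_nonneg (by linarith), abs_of_nonneg (by linarith)]
          have hCeq : C * (x - ε0) = ((hFun P ε0 - hFun P A) * (x - ε0)) / (ε0 - A) := by
            rw [hC]; ring
          rw [hCeq, le_div_iff₀ hea]
          exact goal2
    rw [Metric.continuousWithinAt_iff]
    intro δ hδ
    have hCp : (0:ℝ) < C + 1 := by linarith
    refine ⟨δ / (C + 1), by positivity, ?_⟩
    intro x hx hdist
    have h1 := claim x hx
    rw [Real.dist_eq] at hdist ⊢
    have h2 : C * |x - ε0| ≤ C * (δ / (C + 1)) :=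
      mul_le_mul_of_nonneg_left (le_of_lt hdist) hC0
    have h3 : C * (δ / (C + 1)) < (C + 1) * (δ / (C + 1)) :=
      mul_lt_mul_of_pos_right (by linarith) (div_pos hδ hCp)
    have h4 : (C + 1) * (δ / (C + 1)) = δ := by
      field_simp
    calc |hFun P x - hFun P ε0| ≤ C * |x - ε0| := h1
      _ ≤ C * (δ / (C + 1)) := h2
      _ < (C + 1) * (δ / (C + 1)) := h3
      _ = δ := h4


end Rest

end HFunAux

/-- `h` is continuous and concave on `[P_c(X), P_c(X|Y)]`, and the
supremum defining `h(ε)` is attained, with the privacy constraint met with equality. -/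
theorem hFun_continuous_concave_attained {M N : ℕ} (P : Fin (M + 1) → Fin (N + 1) → ℝ)
    (hpos : ∀ x y, 0 ≤ P x y) (hsum : ∑ x, ∑ y, P x y = 1) :
    ContinuousOn (hFun P) (Set.Icc (PcX P) (PcXY P)) ∧
    ConcaveOn ℝ (Set.Icc (PcX P) (PcXY P)) (hFun P) ∧
    ∀ ε ∈ Set.Icc (PcX P) (PcXY P),
      ∃ G, IsFilter G ∧ privF P G = ε ∧ utilF P G = hFun P ε := by
  exact HFunAux.main_thm P hpos hsum
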